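/- A tangential family germ in prenormal form (ξ,t) ↦ (ξ, k₀t² + (α−k₁)t³ + k₁t²ξ + t²δ(ξ,t)) with k₀ = 0 and k₁ ≠ 0, k₁ ≠ α has criminant set with exactly two branches that are smooth, transversal, and non-vertical. Concretely, for f(ξ,t) = (ξ, k₁ξt² + (α−k₁)t³) with k₁ ≠ 0 and k₁ ≠ α, the zero set of det Df is the union of the line {t = 0} and the line {2k₁ξ + 3(α−k₁)t = 0}, which are distinct transversal lines, neither equal to the vertical line {ξ = 0}. -/

import Mathlib

/-- The Jacobian determinant of a map `f : ℝ × ℝ → ℝ × ℝ` at a point `p`. -/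
noncomputable def jacobianDet (f : ℝ × ℝ → ℝ × ℝ) (p : ℝ × ℝ) : ℝ :=
  (fderiv ℝ f p (1, 0)).1 * (fderiv ℝ f p (0, 1)).2 -
    (fderiv ℝ f p (0, 1)).1 * (fderiv ℝ f p (1, 0)).2

lemma jac_aux (k₁ α : ℝ) (p : ℝ × ℝ) :
    jacobianDet (fun p : ℝ×ℝ => (p.1, k₁ * p.1 * p.2 ^ 2 + (α - k₁) * p.2 ^ 3)) p
      = p.2 * (2 * k₁ * p.1 + 3 * (α - k₁) * p.2) := by
  have hp2 : HasFDerivAt (fun p : ℝ×ℝ => p.2 ^ 2)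
      (((2:ℕ) * p.2 ^ 1) • ContinuousLinearMap.snd ℝ ℝ ℝ) p :=
    (hasDerivAt_pow 2 p.2).comp_hasFDerivAt p hasFDerivAt_snd
  have hp3 : HasFDerivAt (fun p : ℝ×ℝ => p.2 ^ 3)
      (((3:ℕ) * p.2 ^ 2) • ContinuousLinearMap.snd ℝ ℝ ℝ) p :=
    (hasDerivAt_pow 3 p.2).comp_hasFDerivAt p hasFDerivAt_snd
  have h2 := ((hasFDerivAt_fst.const_mul k₁).mul hp2).add (hp3.const_mul (α - k₁))
  have h : HasFDerivAt (fun p : ℝ×ℝ => (p.1, k₁ * p.1 * p.2 ^ 2 + (α - k₁) * p.2 ^ 3)) _ p :=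
    HasFDerivAt.prodMk (hasFDerivAt_fst (p := p)) h2
  rw [jacobianDet, h.fderiv]
  simp
  ring

/-- A second-type prenormal form `f(ξ,t) = (ξ, k₁ξt² + (α−k₁)t³)` with
`k₁ ≠ 0`, `α ≠ k₁` has `det Df(ξ,t) = t·(2k₁ξ + 3(α−k₁)t)`, so the criminant
is the union of the lines `{t = 0}` and `{2k₁ξ + 3(α−k₁)t = 0}`: two distinct
smooth branches which are transversal (the determinant of their normal vectors
`(0,1)` and `(2k₁, 3(α−k₁))` is nonzero) and neither of which is the vertical
line `{ξ = 0}`. -/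
theorem stmt16 (k₁ α : ℝ) (hk₁ : k₁ ≠ 0) (hα : α ≠ k₁)
    (f : ℝ × ℝ → ℝ × ℝ)
    (hf : f = fun p => (p.1, k₁ * p.1 * p.2 ^ 2 + (α - k₁) * p.2 ^ 3)) :
    (∀ p : ℝ × ℝ, jacobianDet f p = p.2 * (2 * k₁ * p.1 + 3 * (α - k₁) * p.2)) ∧
    {p : ℝ × ℝ | jacobianDet f p = 0} =
      {p : ℝ × ℝ | p.2 = 0} ∪ {p : ℝ × ℝ | 2 * k₁ * p.1 + 3 * (α - k₁) * p.2 = 0} ∧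
    {p : ℝ × ℝ | 2 * k₁ * p.1 + 3 * (α - k₁) * p.2 = 0} ≠ {p : ℝ × ℝ | p.2 = 0} ∧
    {p : ℝ × ℝ | 2 * k₁ * p.1 + 3 * (α - k₁) * p.2 = 0} ≠ {p : ℝ × ℝ | p.1 = 0} ∧
    (0 : ℝ) * (3 * (α - k₁)) - 1 * (2 * k₁) ≠ 0 := by
  subst hf
  have hαk : α - k₁ ≠ 0 := sub_ne_zero.mpr hα
  have hjac := jac_aux k₁ α
  refine ⟨hjac, ?_, ?_, ?_, ?_⟩
  · ext p
    simp only [Set.mem_setOf_eq, Set.mem_union, hjac p, mul_eq_zero]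
  · intro h
    have hmem : ((3 * (α - k₁), -(2 * k₁)) : ℝ × ℝ) ∈
        {p : ℝ × ℝ | 2 * k₁ * p.1 + 3 * (α - k₁) * p.2 = 0} := by
      simp only [Set.mem_setOf_eq]; ring
    rw [h] at hmem
    simp only [Set.mem_setOf_eq, neg_eq_zero] at hmem
    exact hk₁ (by linarith)
  · intro h
    have hmem : ((3 * (α - k₁), -(2 * k₁)) : ℝ × ℝ) ∈
        {p : ℝ × ℝ | 2 * k₁ * p.1 + 3 * (α - k₁) * p.2 = 0} := by
      simp only [Set.mem_setOf_eq]; ring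
    rw [h] at hmem
    simp only [Set.mem_setOf_eq] at hmem
    exact hαk (by linarith)
  · simp only [zero_mul, one_mul, zero_sub, ne_eq, neg_eq_zero]
    intro h; exact hk₁ (by linarith)
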